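/- arXiv:1810.05003 — 2 statements merged into one kernel-verified Lean document; each statement's English description precedes it below -/
import Mathlib

section
/- For the k-Fibonacci sequence, F_{k,n−1}·F_{k,n+4} − F_{k,n}·F_{k,n+3} = (−1)^n·(k³+2k) for all n ≥ 1. -/
open TensorProduct

noncomputable def kFib (k : ℝ) : ℕ → ℝ
  | 0 => 0
  | 1 => 1
  | n + 2 => k * kFib k (n + 1) + kFib k n

abbrev Bicomplex : Type := ℂ ⊗[ℝ] ℂ

lemma kFib_aux (k : ℝ) : ∀ m : ℕ,
    kFib k m * kFib k (m + 5) - kFib k (m + 1) * kFib k (m + 4) =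
      (-1 : ℝ) ^ (m + 1) * (k ^ 3 + 2 * k) := by
  intro m
  induction m with
  | zero => simp [kFib]; ring
  | succ m ih =>
    have h1 : kFib k (m + 1 + 5) = k * kFib k (m + 5) + kFib k (m + 4) := rfl
    have h2 : kFib k (m + 2) = k * kFib k (m + 1) + kFib k m := rfl
    have h3 : kFib k (m + 1 + 4) = kFib k (m + 5) := by norm_num
    rw [h1, h3, show m + 1 + 1 = m + 2 from rfl, h2]
    have : kFib k (m + 1) * (k * kFib k (m + 5) + kFib k (m + 4)) -
        (k * kFib k (m + 1) + kFib k m) * kFib k (m + 5) =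
        -(kFib k m * kFib k (m + 5) - kFib k (m + 1) * kFib k (m + 4)) := by ring
    rw [this, ih]
    ring

theorem stmt7 (k : ℝ) (hk : 0 < k) (n : ℕ) (hn : 1 ≤ n) :
    kFib k (n - 1) * kFib k (n + 4) - kFib k n * kFib k (n + 3) = (-1 : ℝ) ^ n * (k ^ 3 + 2 * k) := by
  obtain ⟨m, rfl⟩ := Nat.exists_eq_add_of_le hn
  have := kFib_aux k m
  simpa [Nat.add_sub_cancel, show 1 + m + 4 = m + 5 by omega,
    show 1 + m + 3 = m + 4 by omega, show 1 + m = m + 1 by omega, add_comm] using this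
end

section
/- For the bicomplex k-Fibonacci quaternion Q_{k,n} and its total conjugate Q_{k,n}^{*₃} = F_{k,n} − i·F_{k,n+1} − j·F_{k,n+2} + ij·F_{k,n+3}, one has Q_{k,n}·Q_{k,n}^{*₃} = F_{k,2n+1} + F_{k,2n+5} + 2·ij·(−1)^{n+1}·k. -/
open TensorProduct

noncomputable def bi : Bicomplex := (Complex.I : ℂ) ⊗ₜ[ℝ] (1 : ℂ)
noncomputable def bj : Bicomplex := (1 : ℂ) ⊗ₜ[ℝ] (Complex.I : ℂ)

noncomputable def Q (k : ℝ) (n : ℕ) : Bicomplex :=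
  algebraMap ℝ Bicomplex (kFib k n) + kFib k (n + 1) • bi
    + kFib k (n + 2) • bj + kFib k (n + 3) • (bi * bj)

lemma bi_mul_bi : bi * bi = -1 := by
  rw [bi, Algebra.TensorProduct.tmul_mul_tmul, Complex.I_mul_I, mul_one,
    Algebra.TensorProduct.one_def]
  rw [show ((-1 : ℂ) ⊗ₜ[ℝ] (1 : ℂ)) = -((1:ℂ) ⊗ₜ[ℝ] (1:ℂ)) by
    rw [← neg_tmul]]

lemma bj_mul_bj : bj * bj = -1 := by
  rw [bj, Algebra.TensorProduct.tmul_mul_tmul, Complex.I_mul_I, mul_one,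
    Algebra.TensorProduct.one_def]
  rw [show ((1 : ℂ) ⊗ₜ[ℝ] (-1 : ℂ)) = -((1:ℂ) ⊗ₜ[ℝ] (1:ℂ)) by
    rw [← tmul_neg]]

lemma kFib_add (k : ℝ) (m : ℕ) : ∀ n : ℕ,
    kFib k (m + n + 1) = kFib k (m + 1) * kFib k (n + 1) + kFib k m * kFib k n := by
  intro n
  induction n using Nat.twoStepInduction generalizing m with
  | zero => simp [kFib]
  | one =>
    show kFib k (m + 2) = _
    simp [kFib]; ring
  | more n ih1 ih2 =>
    have h1 := ih1 m
    have h2 := ih2 m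
    have e : m + (n + 2) + 1 = (m + n + 1) + 2 := by omega
    rw [e, show m + n + 1 + 2 = (m + n + 1 + 1) + 1 by ring]
    have e2 : m + n + 1 + 1 = m + (n+1) + 1 := by ring
    rw [show kFib k (m + n + 1 + 1 + 1) = k * kFib k (m + n + 1 + 1) + kFib k (m + n + 1) from rfl]
    rw [e2, h2, h1]
    rw [show kFib k (n + 2 + 1) = k * kFib k (n + 2) + kFib k (n + 1) from rfl,
      show kFib k (n + 2) = k * kFib k (n + 1) + kFib k n from rfl]
    ring

lemma kFib_sq (k : ℝ) (n : ℕ) :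
    kFib k (2 * n + 1) = kFib k (n + 1) ^ 2 + kFib k n ^ 2 := by
  have := kFib_add k n n
  rw [show 2 * n + 1 = n + n + 1 by ring, this]; ring

lemma kFib_cat (k : ℝ) (n : ℕ) :
    kFib k n * kFib k (n + 3) - kFib k (n + 1) * kFib k (n + 2)
      = (-1 : ℝ) ^ (n + 1) * k := by
  induction n with
  | zero => simp [kFib]
  | succ n ih =>
    have h4 : kFib k (n + 4) = k * kFib k (n + 3) + kFib k (n + 2) := rfl
    have h2 : kFib k (n + 2) = k * kFib k (n + 1) + kFib k n := rfl
    rw [show n + 1 + 3 = n + 4 by ring, show n + 1 + 2 = n + 3 by ring, h4]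
    have : kFib k (n + 1) * (k * kFib k (n + 3) + kFib k (n + 2)) -
        kFib k (n + 2) * kFib k (n + 3)
        = -(kFib k n * kFib k (n + 3) - kFib k (n + 1) * kFib k (n + 2)) := by
      rw [h2]; ring
    rw [this, ih]; ring

theorem stmt13 (k : ℝ) (hk : 0 < k) (n : ℕ) :
    Q k n * (algebraMap ℝ Bicomplex (kFib k n) - kFib k (n + 1) • bi
        - kFib k (n + 2) • bj + kFib k (n + 3) • (bi * bj)) =
      algebraMap ℝ Bicomplex (kFib k (2 * n + 1) + kFib k (2 * n + 5))
        + (2 * (-1 : ℝ) ^ (n + 1) * k) • (bi * bj) := by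
  have hsum : kFib k (2 * n + 1) + kFib k (2 * n + 5)
      = kFib k n ^ 2 + kFib k (n+1) ^ 2 + kFib k (n+2) ^ 2 + kFib k (n+3) ^ 2 := by
    have h1 := kFib_sq k n
    have h2 := kFib_sq k (n + 2)
    rw [show 2 * (n + 2) + 1 = 2 * n + 5 by ring] at h2
    rw [h1, h2]; ring
  have hcat : 2 * (-1 : ℝ) ^ (n + 1) * k
      = 2 * (kFib k n * kFib k (n + 3) - kFib k (n + 1) * kFib k (n + 2)) := by
    rw [kFib_cat k n]; ring
  have hsmul : ∀ (r : ℝ) (x : Bicomplex), r • x = algebraMap ℝ Bicomplex r * x :=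
    fun r x => Algebra.smul_def r x
  rw [Q, hsum, hcat]
  simp only [hsmul, map_add, map_mul, map_sub, map_pow, map_ofNat]
  set A := algebraMap ℝ Bicomplex (kFib k n)
  set B := algebraMap ℝ Bicomplex (kFib k (n + 1))
  set C := algebraMap ℝ Bicomplex (kFib k (n + 2))
  set D := algebraMap ℝ Bicomplex (kFib k (n + 3))
  have hx := bi_mul_bi
  have hy := bj_mul_bj
  linear_combination (D^2 * (bj*bj) - B^2) * hx - (C^2 + D^2) * hy
end
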